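/- arXiv:1304.2805 — 2 statements merged into one kernel-verified Lean document; each statement's English description precedes it below -/
import Mathlib

section
/- Let A and B be self-adjoint operators on a finite-dimensional Hilbert space with H = A + B, ‖B‖ ≤ C, and suppose A is diagonal with diagonal entries {d_k} satisfying |d_k - d_ℓ| ≥ 3C + 1 for k ≠ ℓ. Then for every eigenvalue E of H there is a unique index k with |E - d_k| ≤ C, and any corresponding normalized eigenvector ψ satisfies |ψ(k)|² ≥ 2/3. -/
open scoped InnerProductSpace ComplexOrder

/-- **Localization of eigenvectors for diagonally dominant operators.**
Let `H = A + B` act on `ℂ^n` (with the Euclidean norm), where `A` is the diagonal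
operator with real entries `dk`, `B` is self-adjoint with `‖B‖ ≤ C`, and the
diagonal entries satisfy `|dk k - dk l| ≥ 3C + 1` for `k ≠ l`.  Then for every
eigenvalue `E` of `H` there is a unique index `k` with `|E - dk k| ≤ C`, and any
normalized eigenvector `ψ` for `E` satisfies `|ψ k|² ≥ 2/3` at that index. -/
theorem stmt5
    (n : ℕ) (C : ℝ) (hC : 0 < C)
    (A B : EuclideanSpace ℂ (Fin n) →L[ℂ] EuclideanSpace ℂ (Fin n))
    (dk : Fin n → ℝ)
    (hA : ∀ (v : EuclideanSpace ℂ (Fin n)) (k : Fin n), (A v) k = (dk k : ℂ) * v k)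
    (hB : IsSelfAdjoint B) (hBnorm : ‖B‖ ≤ C)
    (hsep : ∀ k l : Fin n, k ≠ l → 3 * C + 1 ≤ |dk k - dk l|)
    (E : ℝ) (ψ : EuclideanSpace ℂ (Fin n)) (hψ : ‖ψ‖ = 1)
    (heig : (A + B) ψ = (E : ℂ) • ψ) :
    (∃! k : Fin n, |E - dk k| ≤ C) ∧
      ∀ k : Fin n, |E - dk k| ≤ C → (2 : ℝ) / 3 ≤ ‖ψ k‖ ^ 2 := by
  -- coordinates of B ψ
  have hcoord : ∀ k, (B ψ) k = ((E - dk k : ℝ) : ℂ) * ψ k := by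
    intro k
    have h := congrArg (fun v => v k) heig
    simp only [ContinuousLinearMap.add_apply, PiLp.add_apply, PiLp.smul_apply,
      smul_eq_mul, hA] at h
    push_cast
    linear_combination h
  have hsum1 : ∑ k, ‖ψ k‖ ^ 2 = 1 := by
    have := PiLp.norm_sq_eq_of_L2 (fun _ : Fin n => ℂ) ψ
    rw [hψ] at this
    simpa using this.symm
  have hBψ : ‖B ψ‖ ≤ C := by
    calc ‖B ψ‖ ≤ ‖B‖ * ‖ψ‖ := B.le_opNorm ψ
    _ ≤ C := by rw [hψ, mul_one]; exact hBnorm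
  have hS : ∑ k, (|E - dk k| * ‖ψ k‖) ^ 2 ≤ C ^ 2 := by
    have h1 : ∑ k, (|E - dk k| * ‖ψ k‖) ^ 2 = ‖B ψ‖ ^ 2 := by
      rw [PiLp.norm_sq_eq_of_L2]
      refine Finset.sum_congr rfl fun k _ => ?_
      rw [hcoord k, norm_mul, Complex.norm_real, Real.norm_eq_abs]
    rw [h1]
    exact pow_le_pow_left₀ (norm_nonneg _) hBψ 2
  -- existence
  have hψ0 : ψ ≠ 0 := by intro h; rw [h] at hψ; simp at hψ
  obtain ⟨j, hj⟩ : ∃ j, ψ j ≠ 0 := by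
    by_contra h
    push_neg at h
    exact hψ0 (PiLp.ext fun i => by simpa using h i)
  have hex : ∃ k, |E - dk k| ≤ C := by
    by_contra h
    push_neg at h
    have hlt : C ^ 2 * ∑ k, ‖ψ k‖ ^ 2 < ∑ k, (|E - dk k| * ‖ψ k‖) ^ 2 := by
      rw [Finset.mul_sum]
      refine Finset.sum_lt_sum (fun k _ => ?_) ⟨j, Finset.mem_univ j, ?_⟩
      · rw [mul_pow]
        have h2 : C ^ 2 ≤ |E - dk k| ^ 2 := by nlinarith [h k, hC]
        exact mul_le_mul_of_nonneg_right h2 (by positivity)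
      · rw [mul_pow]
        have hp : (0:ℝ) < ‖ψ j‖ ^ 2 := pow_pos (norm_pos_iff.mpr hj) 2
        have hsq : C ^ 2 < |E - dk j| ^ 2 := by nlinarith [abs_nonneg (E - dk j), h j]
        exact mul_lt_mul_of_pos_right hsq hp
    rw [hsum1, mul_one] at hlt
    linarith
  obtain ⟨k₀, hk₀⟩ := hex
  have huniq : ∀ k, |E - dk k| ≤ C → k = k₀ := by
    intro k hk
    by_contra hne
    have := hsep k k₀ hne
    have : |dk k - dk k₀| ≤ 2 * C := by
      calc |dk k - dk k₀| = |(E - dk k₀) - (E - dk k)| := by ring_nf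
      _ ≤ |E - dk k₀| + |E - dk k| := abs_sub _ _
      _ ≤ 2 * C := by linarith
    linarith
  constructor
  · exact ⟨k₀, hk₀, huniq⟩
  · intro k hk
    have hkk : k = k₀ := huniq k hk
    subst hkk
    -- for l ≠ k, |E - dk l| ≥ 2C+1
    have hfar : ∀ l, l ≠ k → 2 * C + 1 ≤ |E - dk l| := by
      intro l hl
      have h1 := hsep k l (Ne.symm hl)
      have h2 : |dk k - dk l| ≤ |E - dk l| + |E - dk k| := by
        calc |dk k - dk l| = |(E - dk l) - (E - dk k)| := by ring_nf
        _ ≤ _ := abs_sub _ _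
      linarith
    have htail : ∑ l ∈ Finset.univ.erase k, ‖ψ l‖ ^ 2 ≤ 1 / 3 := by
      have h1 : (2 * C + 1) ^ 2 * ∑ l ∈ Finset.univ.erase k, ‖ψ l‖ ^ 2
          ≤ ∑ l ∈ Finset.univ.erase k, (|E - dk l| * ‖ψ l‖) ^ 2 := by
        rw [Finset.mul_sum]
        refine Finset.sum_le_sum fun l hl => ?_
        rw [mul_pow]
        have hsq : (2 * C + 1) ^ 2 ≤ |E - dk l| ^ 2 := by
          nlinarith [hfar l (Finset.ne_of_mem_erase hl), hC]
        exact mul_le_mul_of_nonneg_right hsq (by positivity)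
      have h2 : ∑ l ∈ Finset.univ.erase k, (|E - dk l| * ‖ψ l‖) ^ 2
          ≤ ∑ l, (|E - dk l| * ‖ψ l‖) ^ 2 :=
        Finset.sum_le_sum_of_subset_of_nonneg (Finset.erase_subset _ _)
          (fun _ _ _ => by positivity)
      have h3 : C ^ 2 ≤ (2 * C + 1) ^ 2 / 3 := by nlinarith
      have h4 : (0:ℝ) < (2 * C + 1) ^ 2 := by positivity
      have h5 : (2 * C + 1) ^ 2 * ∑ l ∈ Finset.univ.erase k, ‖ψ l‖ ^ 2
          ≤ (2 * C + 1) ^ 2 * (1 / 3) := by linarith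
      exact le_of_mul_le_mul_left h5 h4
    have hsplit := Finset.add_sum_erase Finset.univ (fun l => ‖ψ l‖ ^ 2)
      (Finset.mem_univ k)
    simp only at hsplit
    linarith
end

section
/- Let V be a p-periodic potential on ℤ^d, fix x' ∈ [0,1/p_1) × ... × [0,1/p_{d-1}) and E ∈ ℝ. Then the number of x_d ∈ [0, 1/p_d) such that E is an eigenvalue of the Floquet operator Ĥ_{(x',x_d)} is at most 2·p_1···p_{d-1}, provided x_d ↦ det(Ĥ_{(x',x_d)} - E) is not identically zero. -/
open Complex

lemma twoCosAux (z : ℂ) : 2 * Complex.cos z = Complex.exp (z * I) + (Complex.exp (z * I))⁻¹ := by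
  rw [Complex.cos, ← Complex.exp_neg]; ring

lemma exp_two_pi_int (a b : ℂ) (m : ℤ) (h : a = b + m) :
    Complex.exp (2 * Real.pi * a * I) = Complex.exp (2 * Real.pi * b * I) := by
  rw [Complex.exp_eq_exp_iff_exists_int]
  exact ⟨m, by rw [h]; ring⟩

lemma exp_inj_Ico {x y : ℝ} (hx : x ∈ Set.Ico (0:ℝ) 1) (hy : y ∈ Set.Ico (0:ℝ) 1)
    (h : Complex.exp (2 * (Real.pi:ℂ) * (x:ℂ) * I) = Complex.exp (2 * (Real.pi:ℂ) * (y:ℂ) * I)) :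
    x = y := by
  rw [Complex.exp_eq_exp_iff_exists_int] at h
  obtain ⟨n, hn⟩ := h
  have hπ : (Real.pi : ℂ) ≠ 0 := by exact_mod_cast Real.pi_ne_zero
  have hc : (x : ℂ) = (y : ℂ) + (n : ℂ) := by
    have h2 : (2 * Real.pi * I : ℂ) ≠ 0 := by simp [hπ, I_ne_zero]
    have h3 : (x : ℂ) * (2 * Real.pi * I) = ((y : ℂ) + n) * (2 * Real.pi * I) := by
      linear_combination hn
    exact mul_right_cancel₀ h2 h3
  have hr : x = y + n := by exact_mod_cast hc
  have hn0 : n = 0 := by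
    obtain ⟨h1, h2⟩ := hx; obtain ⟨h3, h4⟩ := hy
    have : (-1 : ℝ) < (n : ℝ) := by linarith
    have : (n : ℝ) < 1 := by linarith
    have : (-1 : ℤ) < n := by exact_mod_cast ‹(-1:ℝ) < n›
    have : n < 1 := by exact_mod_cast ‹(n:ℝ) < 1›
    omega
  rw [hn0] at hr; simpa using hr

lemma auxScalar (cc w uu : ℂ) (hw : w ≠ 0) (hu : uu ≠ 0) :
    cc * w + (uu * w ^ 2 + uu⁻¹) = w * (cc + (w * uu + (w * uu)⁻¹)) := by
  field_simp

/-- **Counting quasi-momenta with a prescribed Floquet eigenvalue.**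
Let `V` be a `p`-periodic potential (given through its Fourier coefficients
`V̂ : ∏_j ZMod (p j) → ℂ` on `𝔹_p`), fix `x' ∈ [0,1/p_1) × ⋯ × [0,1/p_d)` for
the first `d` coordinates and `E ∈ ℝ`.  The Floquet matrix at `(x', t)` is
`Ĥ_{(x',t)} k l = δ_{kl} ∑_j 2cos(2π(x_j + k_j/p_j)) + V̂(l - k)` where the last
quasi-momentum coordinate is `t`.  Provided `t ↦ det(Ĥ_{(x',t)} - E)` is not
identically zero, the number of `t ∈ [0, 1/p_{d+1})` for which `E` is an
eigenvalue of `Ĥ_{(x',t)}` is at most `2 p_1 ⋯ p_d`. -/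
theorem stmt13
    (d : ℕ) (p : Fin (d + 1) → ℕ) [∀ j, NeZero (p j)]
    (Vhat : (∀ j, ZMod (p j)) → ℂ)
    (x' : Fin d → ℝ) (hx' : ∀ j : Fin d, x' j ∈ Set.Ico (0 : ℝ) (1 / p j.castSucc))
    (E : ℝ)
    (M : ℝ → Matrix (∀ j, ZMod (p j)) (∀ j, ZMod (p j)) ℂ)
    (hM : ∀ (t : ℝ) (k l : ∀ j, ZMod (p j)), M t k l =
      (if k = l then
        ∑ j : Fin (d + 1),
          2 * Complex.cos (2 * Real.pi *
            ((if h : (j : ℕ) < d then (x' ⟨j, h⟩ : ℂ) else (t : ℂ)) +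
              ((k j).val : ℂ) / (p j : ℂ)))
        else 0) + Vhat (l - k))
    (hne : ∃ t : ℝ, ((M t) - (E : ℂ) • (1 : Matrix _ _ ℂ)).det ≠ 0) :
    {t : ℝ | t ∈ Set.Ico (0 : ℝ) (1 / p (Fin.last d)) ∧
        ((M t) - (E : ℂ) • (1 : Matrix _ _ ℂ)).det = 0}.Finite ∧
      {t : ℝ | t ∈ Set.Ico (0 : ℝ) (1 / p (Fin.last d)) ∧
        ((M t) - (E : ℂ) • (1 : Matrix _ _ ℂ)).det = 0}.ncard ≤
        2 * ∏ j : Fin d, p j.castSucc := by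
  classical
  have hn : 0 < p (Fin.last d) := Nat.pos_of_ne_zero (NeZero.ne _)
  set n : ℕ := p (Fin.last d) with hndef
  set P : ℕ := Fintype.card (∀ j, ZMod (p j)) with hPdef
  have hPprod : P = (∏ j : Fin d, p j.castSucc) * n := by
    rw [hPdef, Fintype.card_pi]
    simp only [ZMod.card]
    rw [Fin.prod_univ_castSucc]
  set e : ℝ → ℂ := fun t => Complex.exp (2 * Real.pi * t * I) with hedef
  set u : (∀ j, ZMod (p j)) → ℂ := fun k =>
    Complex.exp (2 * Real.pi * (((k (Fin.last d)).val : ℂ) / (n : ℂ)) * I) with hudef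
  have he0 : ∀ t, e t ≠ 0 := fun t => Complex.exp_ne_zero _
  have hu0 : ∀ k, u k ≠ 0 := fun k => Complex.exp_ne_zero _
  set c : (∀ j, ZMod (p j)) → (∀ j, ZMod (p j)) → ℂ := fun k l =>
    (if k = l then
      (∑ j : Fin d, 2 * Complex.cos (2 * Real.pi *
        ((x' j : ℂ) + ((k j.castSucc).val : ℂ) / (p j.castSucc : ℂ)))) - E
      else 0) + Vhat (l - k) with hcdef
  have claimA : ∀ (t : ℝ) (k l : ∀ j, ZMod (p j)),
      ((M t) - (E : ℂ) • (1 : Matrix (∀ j, ZMod (p j)) (∀ j, ZMod (p j)) ℂ)) k l =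
      c k l + (if k = l then e t * u k + (e t * u k)⁻¹ else 0) := by
    intro t k l
    rw [Matrix.sub_apply, Matrix.smul_apply, Matrix.one_apply, hM, hcdef]
    by_cases hkl : k = l
    · subst hkl
      simp only [if_true]
      rw [Fin.sum_univ_castSucc]
      have hcs : ∀ j : Fin d,
          (if h : ((j.castSucc : Fin (d+1)) : ℕ) < d then ((x' ⟨(j.castSucc : Fin (d+1)), h⟩ : ℝ) : ℂ)
            else (t : ℂ)) = ((x' j : ℝ) : ℂ) := by
        intro j
        rw [dif_pos (show ((j.castSucc : Fin (d+1)) : ℕ) < d by simpa using j.isLt)]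
        rfl
      have hlast :
          2 * Complex.cos (2 * Real.pi *
            ((if h : ((Fin.last d : Fin (d+1)) : ℕ) < d then ((x' ⟨(Fin.last d : Fin (d+1)), h⟩ : ℝ) : ℂ)
              else (t : ℂ)) + ((k (Fin.last d)).val : ℂ) / (p (Fin.last d) : ℂ)))
          = e t * u k + (e t * u k)⁻¹ := by
        rw [dif_neg (by simp)]
        rw [twoCosAux]
        have harg : 2 * (Real.pi:ℂ) * ((t:ℂ) + ((k (Fin.last d)).val : ℂ) / (p (Fin.last d) : ℂ)) * I
            = 2 * (Real.pi:ℂ) * (t:ℂ) * I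
              + 2 * (Real.pi:ℂ) * (((k (Fin.last d)).val : ℂ) / ((n:ℕ) : ℂ)) * I := by
          rw [hndef]; ring
        rw [harg, Complex.exp_add]
      simp only [hcs, hlast, smul_eq_mul, mul_one]
      ring
    · simp only [if_neg hkl, smul_eq_mul, mul_zero]
      ring
  set Bp : Matrix (∀ j, ZMod (p j)) (∀ j, ZMod (p j)) (Polynomial ℂ) := fun k l =>
    Polynomial.C (c k l) * Polynomial.X +
      (if k = l then Polynomial.C (u k) * Polynomial.X ^ 2 + Polynomial.C (u k)⁻¹ else 0)
    with hBdef
  set Q : Polynomial ℂ := Bp.det with hQdef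
  have claimEval : ∀ t : ℝ,
      Q.eval (e t) = (e t) ^ P * ((M t) - (E : ℂ) • (1 : Matrix _ _ ℂ)).det := by
    intro t
    have h1 : Q.eval (e t) = (Bp.map (Polynomial.evalRingHom (e t))).det := by
      rw [hQdef, ← Polynomial.coe_evalRingHom]
      exact RingHom.map_det _ _
    have h2 : Bp.map (Polynomial.evalRingHom (e t))
        = (e t) • ((M t) - (E : ℂ) • (1 : Matrix (∀ j, ZMod (p j)) (∀ j, ZMod (p j)) ℂ)) := by
      ext k l
      rw [Matrix.map_apply, Matrix.smul_apply, claimA, hBdef, smul_eq_mul,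
        Polynomial.coe_evalRingHom]
      by_cases hkl : k = l
      · simp only [if_pos hkl, Polynomial.eval_add, Polynomial.eval_mul, Polynomial.eval_C,
          Polynomial.eval_X, Polynomial.eval_pow]
        exact auxScalar _ _ _ (he0 t) (hu0 k)
      · simp only [if_neg hkl, Polynomial.eval_add, Polynomial.eval_mul, Polynomial.eval_C,
          Polynomial.eval_X, Polynomial.eval_zero, add_zero]
        ring
    rw [h1, h2, Matrix.det_smul]
  have hQdeg : Q.natDegree ≤ 2 * P := by
    have hent : ∀ k l, (Bp k l).natDegree ≤ 2 := by
      intro k l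
      rw [hBdef]
      refine le_trans (Polynomial.natDegree_add_le _ _) (max_le ?_ ?_)
      · refine le_trans (Polynomial.natDegree_mul_le) ?_
        simp
      · by_cases hkl : k = l
        · rw [if_pos hkl]
          refine le_trans (Polynomial.natDegree_add_le _ _) (max_le ?_ (by simp))
          refine le_trans (Polynomial.natDegree_mul_le) ?_
          simp
        · rw [if_neg hkl]; simp
    rw [hQdef, Matrix.det_apply']
    refine Polynomial.natDegree_sum_le_of_forall_le _ _ ?_
    intro σ _
    refine le_trans (Polynomial.natDegree_mul_le) ?_
    rw [Polynomial.natDegree_intCast, zero_add]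
    refine le_trans (Polynomial.natDegree_prod_le _ _) ?_
    calc ∑ i, (Bp (σ i) i).natDegree ≤ ∑ _i : (∀ j, ZMod (p j)), 2 :=
          Finset.sum_le_sum (fun i _ => hent (σ i) i)
      _ = 2 * P := by
          rw [Finset.sum_const, Finset.card_univ, smul_eq_mul, mul_comm, hPdef]
  have hQne : Q ≠ 0 := by
    obtain ⟨t0, ht0⟩ := hne
    intro h
    apply ht0
    have h2 := claimEval t0
    rw [h] at h2
    simp only [Polynomial.eval_zero] at h2
    exact (mul_eq_zero.mp h2.symm).resolve_left (pow_ne_zero _ (he0 t0))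
  set δ : ∀ j, ZMod (p j) := fun j => if j = Fin.last d then 1 else 0 with hδdef
  have hδlast : δ (Fin.last d) = 1 := by rw [hδdef]; simp
  have hδcs : ∀ j : Fin d, δ j.castSucc = 0 := by
    intro j
    rw [hδdef]
    simp only [if_neg (Fin.castSucc_lt_last j).ne]
  have hiii : ∀ (t : ℝ) (k : ∀ j, ZMod (p j)),
      e (t + 1/(n:ℝ)) * u k = e t * u (k + δ) := by
    intro t k
    have hδl : (k + δ) (Fin.last d) = k (Fin.last d) + 1 := by
      rw [Pi.add_apply, hδlast]
    set v := (k (Fin.last d)).val with hv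
    have hval : ((k (Fin.last d) + 1).val) = (v + 1) % n := by
      rw [ZMod.val_add, ZMod.val_one_eq_one_mod]
      show ((k (Fin.last d)).val + 1 % p (Fin.last d)) % p (Fin.last d)
        = ((k (Fin.last d)).val + 1) % p (Fin.last d)
      simp [Nat.add_mod]
    have hu1 : u (k + δ) = Complex.exp
        (2 * (Real.pi:ℂ) * (((v + 1 : ℕ) : ℂ)/((n:ℕ):ℂ)) * I) := by
      rw [hudef]
      simp only [hδl, hval]
      apply exp_two_pi_int _ _ (-(((v+1)/n : ℕ) : ℤ))
      have hn0 : ((n:ℕ):ℂ) ≠ 0 := by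
        exact_mod_cast Nat.cast_ne_zero.mpr hn.ne'
      have hZ : (((v+1) % n : ℕ) : ℤ) = ((v+1 : ℕ) : ℤ) + (-(((v+1)/n : ℕ) : ℤ)) * (n : ℤ) := by
        have h9 := Int.mul_ediv_add_emod ((v:ℤ)+1) (n:ℤ)
        push_cast
        linarith [h9]
      have hCC : (((v+1) % n : ℕ) : ℂ)
          = ((v+1 : ℕ) : ℂ) + ((-(((v+1)/n : ℕ) : ℤ) : ℤ) : ℂ) * ((n:ℕ):ℂ) := by
        rw [show (((v+1) % n : ℕ) : ℂ) = ((((v+1) % n : ℕ) : ℤ) : ℂ) by norm_cast, hZ]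
        push_cast; ring
      have hdiv := congrArg (fun z : ℂ => z / ((n:ℕ):ℂ)) hCC
      rw [hdiv, add_div, mul_div_assoc, div_self hn0, mul_one]
    rw [hu1, hedef, hudef]
    simp only
    rw [← Complex.exp_add, ← Complex.exp_add]
    congr 1
    push_cast
    ring
  have hccc : ∀ k l : (∀ j, ZMod (p j)), c (k + δ) (l + δ) = c k l := by
    intro k l
    rw [hcdef]
    simp only
    have h1 : (l + δ) - (k + δ) = l - k := by abel
    have hkl : (k + δ = l + δ) ↔ k = l :=
      ⟨fun h => add_right_cancel h, fun h => by rw [h]⟩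
    have h2 : ∀ j : Fin d, (k + δ) j.castSucc = k j.castSucc := by
      intro j
      rw [Pi.add_apply, hδcs, add_zero]
    simp only [h1, hkl, h2]
  have hper1 : ∀ t : ℝ,
      ((M (t + 1/(n:ℝ))) - (E : ℂ) • (1 : Matrix _ _ ℂ)).det
        = ((M t) - (E : ℂ) • (1 : Matrix _ _ ℂ)).det := by
    intro t
    have hmat : (M (t + 1/(n:ℝ)) - (E:ℂ) • (1 : Matrix (∀ j, ZMod (p j)) (∀ j, ZMod (p j)) ℂ)) =
        (M t - (E:ℂ) • 1).submatrix (⇑(Equiv.addRight δ)) (⇑(Equiv.addRight δ)) := by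
      ext k l
      simp only [Matrix.submatrix_apply, Equiv.coe_addRight]
      rw [claimA, claimA]
      have hkl : (k + δ = l + δ) ↔ k = l :=
        ⟨fun h => add_right_cancel h, fun h => by rw [h]⟩
      rw [hccc]
      by_cases h : k = l
      · rw [if_pos h, if_pos (hkl.mpr h), hiii t k]
      · rw [if_neg h, if_neg (fun hc => h (hkl.mp hc))]
    rw [hmat, Matrix.det_submatrix_equiv_self]
  have hper : ∀ (m : ℕ) (t : ℝ),
      ((M (t + m / n)) - (E : ℂ) • (1 : Matrix _ _ ℂ)).det
        = ((M t) - (E : ℂ) • (1 : Matrix _ _ ℂ)).det := by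
    intro m
    induction m with
    | zero => intro t; norm_num
    | succ m ih =>
      intro t
      have harr : t + ((m + 1 : ℕ) : ℝ)/(n:ℝ) = (t + 1/(n:ℝ)) + (m:ℝ)/(n:ℝ) := by
        push_cast; ring
      rw [harr, ih, hper1]
  set S : Set ℝ := {t : ℝ | t ∈ Set.Ico (0 : ℝ) (1 / (n:ℝ)) ∧
      ((M t) - (E : ℂ) • (1 : Matrix _ _ ℂ)).det = 0} with hSdef
  have hroot : ∀ t ∈ S, ∀ m : ℕ, Q.eval (e (t + m / n)) = 0 := by
    intro t ht m
    rw [claimEval, hper m t, ht.2, mul_zero]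
  have hmem : ∀ t ∈ S, ∀ m : ℕ, m ∈ Finset.range n → (t + m / n) ∈ Set.Ico (0:ℝ) 1 := by
    intro t ht m hm
    rw [Finset.mem_range] at hm
    obtain ⟨⟨h1, h2⟩, -⟩ := ht
    have hnR : (0:ℝ) < n := by exact_mod_cast hn
    constructor
    · positivity
    · have hm' : (m : ℝ) + 1 ≤ n := by exact_mod_cast hm
      have h6 : 1/(n:ℝ) + (m:ℝ)/n ≤ 1 := by
        rw [← add_div, div_le_one hnR]
        linarith
      have h7 : (m:ℝ)/n ≤ (m:ℝ)/n := le_refl _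
      linarith
  have hinj : ∀ t₁ ∈ S, ∀ t₂ ∈ S, ∀ m₁ ∈ Finset.range n, ∀ m₂ ∈ Finset.range n,
      e (t₁ + m₁ / n) = e (t₂ + m₂ / n) → t₁ = t₂ ∧ m₁ = m₂ := by
    intro t₁ h₁ t₂ h₂ m₁ hm₁ m₂ hm₂ hE
    have hx := exp_inj_Ico (hmem t₁ h₁ m₁ hm₁) (hmem t₂ h₂ m₂ hm₂) hE
    have hnR : (0:ℝ) < n := by exact_mod_cast hn
    obtain ⟨⟨a1, a2⟩, -⟩ := h₁; obtain ⟨⟨b1, b2⟩, -⟩ := h₂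
    have hmm : m₁ = m₂ := by
      by_contra hne'
      rcases Nat.lt_or_ge m₁ m₂ with h | h
      · have : (m₁ : ℝ) + 1 ≤ m₂ := by exact_mod_cast h
        have : ((m₁:ℝ) + 1)/n ≤ (m₂:ℝ)/n := by gcongr
        have h5 : (m₁:ℝ)/n + 1/n ≤ (m₂:ℝ)/n := by
          rw [← add_div]; exact this
        linarith
      · have h' : m₂ < m₁ := lt_of_le_of_ne h (by omega)
        have : (m₂ : ℝ) + 1 ≤ m₁ := by exact_mod_cast h'
        have h5 : (m₂:ℝ)/n + 1/n ≤ (m₁:ℝ)/n := by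
          rw [← add_div]; gcongr
        linarith
    refine ⟨?_, hmm⟩
    rw [hmm] at hx
    linarith [hx]
  have hfin : S.Finite := by
    have himg : (fun t : ℝ => e (t + (0:ℕ) / n)) '' S ⊆ ↑Q.roots.toFinset := by
      intro z hz
      obtain ⟨t, ht, rfl⟩ := hz
      simp only [Finset.mem_coe, Multiset.mem_toFinset]
      rw [Polynomial.mem_roots hQne]
      exact hroot t ht 0
    refine Set.Finite.of_finite_image ((Q.roots.toFinset.finite_toSet).subset himg) ?_
    intro t₁ h₁ t₂ h₂ hE
    exact (hinj t₁ h₁ t₂ h₂ 0 (Finset.mem_range.mpr hn) 0 (Finset.mem_range.mpr hn) hE).1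
  refine ⟨hfin, ?_⟩
  -- cardinality bound
  have key : S.ncard * n ≤ 2 * P := by
    have hcard : S.ncard * n = (hfin.toFinset ×ˢ Finset.range n).card := by
      rw [Finset.card_product, Finset.card_range, Set.ncard_eq_toFinset_card S hfin]
    rw [hcard]
    calc (hfin.toFinset ×ˢ Finset.range n).card ≤ Q.roots.toFinset.card := by
          apply Finset.card_le_card_of_injOn (fun q => e (q.1 + q.2 / n))
          · intro q hq
            rw [Finset.mem_coe, Finset.mem_product] at hq
            have ht : q.1 ∈ S := hfin.mem_toFinset.mp hq.1
            rw [Finset.mem_coe, Multiset.mem_toFinset, Polynomial.mem_roots hQne]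
            exact hroot q.1 ht q.2
          · intro q1 hq1 q2 hq2 hE
            rw [Finset.mem_coe, Finset.mem_product] at hq1 hq2
            have := hinj q1.1 (hfin.mem_toFinset.mp hq1.1) q2.1 (hfin.mem_toFinset.mp hq2.1)
              q1.2 hq1.2 q2.2 hq2.2 hE
            exact Prod.ext this.1 this.2
      _ ≤ Q.roots.card := Q.roots.toFinset_card_le
      _ ≤ Q.natDegree := Polynomial.card_roots' Q
      _ ≤ 2 * P := hQdeg
  rw [hPprod] at key
  exact Nat.le_of_mul_le_mul_right (by rw [mul_assoc]; exact key) hn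
end
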